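/- Fix real constants K > 0, D > 0 and parameters l > 0, L > 0. The radial function c(x, y) = c_D(√(x² + y²); l, L) satisfies: (i) Δc = −K/D at every point of the open annulus l < √(x² + y²) < l + L; (ii) c = 0 on the inner circle √(x² + y²) = l; (iii) the radial derivative d/dr [c_D(r; l, L)] vanishes at r = l + L, so ∇c = 0 on the outer circle √(x² + y²) = l + L; and (iv) c_D(r; l, L) is nonnegative and nondecreasing in r on the interval [l, l + L]. -/

import Mathlib

open Metric Set Filter
open scoped Matrix RealInnerProductSpace Topology

noncomputable section

/-- The Euclidean plane ℝ². -/
abbrev E2 := EuclideanSpace ℝ (Fin 2)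

/-- The Laplacian `c_xx + c_yy` of a function on the plane. -/
noncomputable def lap (c : E2 → ℝ) (p : E2) : ℝ :=
  ∑ i : Fin 2, fderiv ℝ (fun q => fderiv ℝ c q (EuclideanSpace.single i 1)) p
    (EuclideanSpace.single i 1)

/-- A Poisson solution on a bounded open set `Ω ⊆ ℝ²` (for fixed constants `K, D`):
continuous on the closure of `Ω`, twice continuously differentiable on `Ω`,
satisfying `Δc = -K/D` on `Ω` and `c = 0` on the boundary `∂Ω`. -/
structure IsPoissonSolution (K D : ℝ) (Ω : Set E2) (c : E2 → ℝ) : Prop where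
  contOn : ContinuousOn c (closure Ω)
  smooth : ContDiffOn ℝ 2 c Ω
  eqn : ∀ p ∈ Ω, lap c p = -(K / D)
  bdry : ∀ p ∈ frontier Ω, c p = 0

/-- The "open doughnut" radial comparison function
`c_D(r; l, L) = (K/D)·((l² − r²)/4 + (1/2)·ln(r/l)·(l+L)²)`. -/
noncomputable def cD (K D l L r : ℝ) : ℝ :=
  K / D * ((l ^ 2 - r ^ 2) / 4 + 1 / 2 * Real.log (r / l) * (l + L) ^ 2)

namespace OpenDoughnutAux

/-- squared norm as a sum of squares of coordinates -/
noncomputable def Nsq (p : E2) : ℝ := ∑ i : Fin 2, (EuclideanSpace.proj i p) ^ 2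

/-- the derivative of `Nsq` -/
noncomputable def fN (p : E2) : E2 →L[ℝ] ℝ :=
  ∑ i : Fin 2, ((2 : ℕ) * EuclideanSpace.proj i p ^ 1) • (EuclideanSpace.proj i : E2 →L[ℝ] ℝ)

lemma Nsq_eq (p : E2) : Nsq p = ‖p‖ ^ 2 := by
  rw [EuclideanSpace.norm_eq, Real.sq_sqrt (by positivity)]
  simp [Nsq]

lemma hasFDerivAt_Nsq (p : E2) : HasFDerivAt Nsq (fN p) p :=
  HasFDerivAt.fun_sum fun i _ =>
    (hasDerivAt_pow 2 (EuclideanSpace.proj i p)).comp_hasFDerivAt p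
      ((EuclideanSpace.proj i : E2 →L[ℝ] ℝ).hasFDerivAt (x := p))

lemma fN_apply (p : E2) (i : Fin 2) : fN p (EuclideanSpace.single i 1) = 2 * p i := by
  simp only [fN, ContinuousLinearMap.sum_apply, ContinuousLinearMap.smul_apply,
    PiLp.proj_apply, EuclideanSpace.single_apply, Fin.sum_univ_two, smul_eq_mul]
  fin_cases i <;> simp

/-- radial profile as a function of the squared radius -/
noncomputable def gg (K D l L s : ℝ) : ℝ :=
  K / D * ((l ^ 2 - s) / 4 + (1 / 4 * Real.log s - 1 / 2 * Real.log l) * (l + L) ^ 2)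

noncomputable def gg' (K D l L s : ℝ) : ℝ :=
  K / D * (-(1 / 4) + (l + L) ^ 2 * (4 * s)⁻¹)

noncomputable def gg'' (K D l L s : ℝ) : ℝ :=
  K / D * (-((l + L) ^ 2 / (4 * s ^ 2)))

lemma hasDerivAt_gg (K D l L : ℝ) {s : ℝ} (hs : 0 < s) :
    HasDerivAt (fun s => gg K D l L s) (gg' K D l L s) s := by
  have h1 : HasDerivAt (fun s : ℝ => (l ^ 2 - s) / 4) (-1 / 4) s :=
    ((hasDerivAt_id s).const_sub (l ^ 2)).div_const 4
  have h2 : HasDerivAt (fun s : ℝ => (1 / 4 * Real.log s - 1 / 2 * Real.log l) * (l + L) ^ 2)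
      ((1 / 4 * s⁻¹) * (l + L) ^ 2) s :=
    (((Real.hasDerivAt_log hs.ne').const_mul (1 / 4)).sub_const (1 / 2 * Real.log l)).mul_const _
  have h3 := (h1.add h2).const_mul (K / D)
  refine h3.congr_deriv ?_
  unfold gg'
  field_simp

lemma hasDerivAt_gg' (K D l L : ℝ) {s : ℝ} (hs : 0 < s) :
    HasDerivAt (fun s => gg' K D l L s) (gg'' K D l L s) s := by
  have h0 : (4 : ℝ) * s ≠ 0 := by positivity
  have h1 : HasDerivAt (fun s : ℝ => (4 * s)⁻¹) (-(4 * 1) / (4 * s) ^ 2) s :=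
    ((hasDerivAt_id s).const_mul 4).inv h0
  have h2 := ((h1.const_mul ((l + L) ^ 2)).const_add (-(1 / 4) : ℝ)).const_mul (K / D)
  refine h2.congr_deriv ?_
  unfold gg''
  field_simp

end OpenDoughnutAux

open OpenDoughnutAux

set_option maxHeartbeats 1000000 in
/-- Open Doughnut Lemma: The radial function
`c(x,y) = c_D(√(x²+y²); l, L)` satisfies `Δc = −K/D` on the open annulus
`l < √(x²+y²) < l + L`, vanishes on the inner circle, has vanishing radial
derivative (hence vanishing gradient) on the outer circle, and `c_D(·; l, L)` is
nonnegative and nondecreasing on `[l, l + L]`. -/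
theorem open_doughnut (K D l L : ℝ) (hK : 0 < K) (hD : 0 < D) (hl : 0 < l) (hL : 0 < L)
    (c : E2 → ℝ) (hcdef : c = fun p => cD K D l L ‖p‖) :
    (∀ p : E2, l < ‖p‖ → ‖p‖ < l + L → lap c p = -(K / D)) ∧
      (∀ p : E2, ‖p‖ = l → c p = 0) ∧
      (deriv (fun r => cD K D l L r) (l + L) = 0 ∧
        ∀ p : E2, ‖p‖ = l + L → gradient c p = 0) ∧
      ((∀ r ∈ Set.Icc l (l + L), 0 ≤ cD K D l L r) ∧
        MonotoneOn (fun r => cD K D l L r) (Set.Icc l (l + L))) := by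
  have hlL : (0 : ℝ) < l + L := by linarith
  -- continuity and openness of the positivity set of `Nsq`
  have hNcont : Continuous Nsq :=
    continuous_finset_sum _ fun i _ => ((EuclideanSpace.proj i).continuous.pow 2)
  have hUopen : IsOpen {q : E2 | 0 < Nsq q} := isOpen_lt continuous_const hNcont
  -- `c` agrees with `gg ∘ Nsq` on the positivity set
  have hc_eqU : ∀ q : E2, 0 < Nsq q → c q = gg K D l L (Nsq q) := by
    intro q hq
    have hq' : 0 < ‖q‖ := by
      rw [Nsq_eq q] at hq; nlinarith [norm_nonneg q]
    rw [hcdef]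
    simp only
    unfold cD gg
    rw [Nsq_eq q, Real.log_div hq'.ne' hl.ne', Real.log_pow]
    push_cast
    ring
  -- first derivative of `c`
  have hfc : ∀ q : E2, 0 < Nsq q → HasFDerivAt c (gg' K D l L (Nsq q) • fN q) q := by
    intro q hq
    have h := (hasDerivAt_gg K D l L hq).comp_hasFDerivAt q (hasFDerivAt_Nsq q)
    refine h.congr_of_eventuallyEq ?_
    filter_upwards [hUopen.mem_nhds hq] with x hx
    simpa using hc_eqU x hx
  -- derivative of the radial profile `cD`
  have hcd : ∀ r : ℝ, 0 < r → HasDerivAt (fun r => cD K D l L r)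
      (K / D * (-(r / 2) + (l + L) ^ 2 / (2 * r))) r := by
    intro r hr
    have h1 : HasDerivAt (fun r : ℝ => (l ^ 2 - r ^ 2) / 4) (-(r / 2)) r := by
      have := ((hasDerivAt_pow 2 r).const_sub (l ^ 2)).div_const 4
      refine this.congr_deriv ?_
      push_cast
      ring
    have hlog : HasDerivAt (fun x : ℝ => Real.log (x / l)) r⁻¹ r := by
      have h := (Real.hasDerivAt_log hr.ne').sub_const (Real.log l)
      refine h.congr_of_eventuallyEq ?_
      filter_upwards [eventually_gt_nhds hr] with x hx
      rw [Real.log_div hx.ne' hl.ne']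
    have h2 := (hlog.const_mul (1 / 2 : ℝ)).mul_const ((l + L) ^ 2)
    have h3 := (h1.add h2).const_mul (K / D)
    refine h3.congr_deriv ?_
    have hr' : r ≠ 0 := hr.ne'
    field_simp
  refine ⟨?_, ?_, ⟨?_, ?_⟩, ?_⟩
  · -- Laplacian on the annulus
    intro p hp1 hp2
    have h0n : 0 < ‖p‖ := hl.trans hp1
    have hs : 0 < Nsq p := by
      rw [Nsq_eq]; exact pow_pos h0n 2
    have key : ∀ i : Fin 2,
        fderiv ℝ (fun q => fderiv ℝ c q (EuclideanSpace.single i 1)) p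
          (EuclideanSpace.single i 1)
        = gg' K D l L (Nsq p) * 2 + 2 * p i * (gg'' K D l L (Nsq p) * (2 * p i)) := by
      intro i
      have hA : HasFDerivAt (fun q => gg' K D l L (Nsq q)) (gg'' K D l L (Nsq p) • fN p) p :=
        (hasDerivAt_gg' K D l L hs).comp_hasFDerivAt p (hasFDerivAt_Nsq p)
      have hB : HasFDerivAt (fun q : E2 => 2 * EuclideanSpace.proj i q)
          ((2 : ℝ) • (EuclideanSpace.proj i : E2 →L[ℝ] ℝ)) p :=
        ((EuclideanSpace.proj i : E2 →L[ℝ] ℝ).hasFDerivAt (x := p)).const_mul (2 : ℝ)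
      have hAB := hA.mul hB
      have hev : (fun q => fderiv ℝ c q (EuclideanSpace.single i 1)) =ᶠ[𝓝 p]
          (fun q => gg' K D l L (Nsq q) * (2 * EuclideanSpace.proj i q)) := by
        filter_upwards [hUopen.mem_nhds hs] with x hx
        rw [(hfc x hx).fderiv]
        simp [fN_apply]
      rw [(hAB.congr_of_eventuallyEq hev).fderiv]
      simp [fN_apply, EuclideanSpace.single_apply]
    have hsum : p 0 ^ 2 + p 1 ^ 2 = Nsq p := by
      simp [Nsq, Fin.sum_univ_two]
    have hs' : Nsq p ≠ 0 := ne_of_gt hs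
    calc lap c p = 4 * gg' K D l L (Nsq p) + 4 * Nsq p * gg'' K D l L (Nsq p) := by
          unfold lap
          rw [Fin.sum_univ_two, key 0, key 1, ← hsum]
          ring
      _ = -(K / D) := by
          unfold gg' gg''
          field_simp
          ring
  · -- inner circle
    intro p hp
    rw [hcdef]
    simp only
    rw [hp]
    unfold cD
    rw [div_self hl.ne', Real.log_one]
    ring
  · -- radial derivative at the outer radius
    rw [(hcd (l + L) hlL).deriv]
    have h2 : (l + L) ≠ 0 := hlL.ne'
    field_simp
    ring
  · -- gradient on the outer circle
    intro p hp
    have hs : 0 < Nsq p := by rw [Nsq_eq, hp]; positivity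
    have h0 : gg' K D l L (Nsq p) = 0 := by
      rw [Nsq_eq, hp]
      unfold gg'
      have h2 : (l + L) ≠ 0 := hlL.ne'
      field_simp
      ring
    have hfd : fderiv ℝ c p = 0 := by
      rw [(hfc p hs).fderiv, h0, zero_smul]
    unfold gradient
    rw [hfd]
    simp
  · -- nonnegativity and monotonicity
    have hmono : MonotoneOn (fun r => cD K D l L r) (Set.Icc l (l + L)) := by
      apply monotoneOn_of_deriv_nonneg (convex_Icc _ _)
      · intro x hx
        exact (hcd x (hl.trans_le hx.1)).continuousAt.continuousWithinAt
      · rw [interior_Icc]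
        intro x hx
        exact ((hcd x (hl.trans hx.1)).differentiableAt).differentiableWithinAt
      · rw [interior_Icc]
        intro x hx
        have hx0 : 0 < x := hl.trans hx.1
        rw [(hcd x hx0).deriv]
        have heq : -(x / 2) + (l + L) ^ 2 / (2 * x) = ((l + L) ^ 2 - x ^ 2) / (2 * x) := by
          field_simp
          ring
        rw [heq]
        apply mul_nonneg (by positivity)
        apply div_nonneg _ (by positivity)
        nlinarith [hx.2, hx0]
    have h0 : cD K D l L l = 0 := by
      unfold cD
      rw [div_self hl.ne', Real.log_one]
      ring
    refine ⟨?_, hmono⟩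
    intro r hr
    have := hmono ⟨le_refl l, by linarith⟩ hr hr.1
    simpa [h0] using this
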